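/- Suppose the daily conflict graph is the same graph G on each of the m days, and that the chromatic number of G equals its clique number (G is weakly perfect). Then a k-fair solution exists if and only if k·χ(G) ≤ m. -/

import Mathlib

theorem weakly_perfect_k_fair_iff (n m k χ : ℕ) (G : SimpleGraph (Fin n))
    (hchrom : G.chromaticNumber = (χ : ℕ∞))
    (hclique : ∃ K : Finset (Fin n), G.IsNClique χ K) :
    (∃ σ : Fin m → Finset (Fin n),
      (∀ i, ∀ a ∈ σ i, ∀ b ∈ σ i, ¬ G.Adj a b) ∧
      (∀ j : Fin n, k ≤ (Finset.univ.filter (fun i => j ∈ σ i)).card)) ↔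
    k * χ ≤ m := by
  obtain ⟨K, hK⟩ := hclique
  constructor
  · rintro ⟨σ, hind, hfair⟩
    have hsum : ∑ j ∈ K, (Finset.univ.filter (fun i => j ∈ σ i)).card
        = ∑ i : Fin m, (K.filter (fun j => j ∈ σ i)).card := by
      simp_rw [Finset.card_filter]
      rw [Finset.sum_comm]
    have hle1 : ∀ i : Fin m, (K.filter (fun j => j ∈ σ i)).card ≤ 1 := by
      intro i
      apply Finset.card_le_one.2
      intro a ha b hb
      simp only [Finset.mem_filter] at ha hb
      by_contra hab
      exact hind i a ha.2 b hb.2 (hK.1 ha.1 hb.1 hab)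
    calc k * χ = ∑ _j ∈ K, k := by rw [Finset.sum_const, hK.2, smul_eq_mul, mul_comm]
      _ ≤ ∑ j ∈ K, (Finset.univ.filter (fun i => j ∈ σ i)).card :=
          Finset.sum_le_sum fun j _ => hfair j
      _ = ∑ i : Fin m, (K.filter (fun j => j ∈ σ i)).card := hsum
      _ ≤ ∑ _i : Fin m, 1 := Finset.sum_le_sum fun i _ => hle1 i
      _ = m := by simp
  · intro hm
    have hcol : G.Colorable χ := by
      rw [← SimpleGraph.chromaticNumber_le_iff_colorable, hchrom]
    obtain ⟨C⟩ := hcol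
    rcases Nat.eq_zero_or_pos k with hk | hk
    · exact ⟨fun _ => ∅, by simp, by simp [hk]⟩
    refine ⟨fun i => if i.val < k * χ then
        Finset.univ.filter (fun j => (C j : ℕ) = i.val / k) else ∅, ?_, ?_⟩
    · intro i a ha b hb hadj
      by_cases h : i.val < k * χ
      · simp only [h, if_true, Finset.mem_filter] at ha hb
        exact C.valid hadj (Fin.val_injective (ha.2.trans hb.2.symm))
      · simp [h] at ha
    · intro j
      set c : ℕ := (C j : ℕ) with hc
      have hcχ : c < χ := (C j).2
      have hm0 : 0 < m :=
        lt_of_lt_of_le (Nat.mul_pos hk (by omega)) hm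
      have hlt : ∀ t, t < k → k * c + t < k * χ := by
        intro t ht
        have h1 : k * c + t < k * (c + 1) := by
          rw [Nat.mul_succ]; exact Nat.add_lt_add_left ht _
        exact lt_of_lt_of_le h1 (Nat.mul_le_mul_left k hcχ)
      have key := Finset.card_le_card_of_injOn
        (f := fun t : ℕ => (⟨(k * c + t) % m, Nat.mod_lt _ hm0⟩ : Fin m))
        (s := Finset.range k)
        (t := Finset.univ.filter (fun i : Fin m => j ∈ if i.val < k * χ then
          Finset.univ.filter (fun j' => (C j' : ℕ) = i.val / k) else ∅))
        ?_ ?_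
      · rw [Finset.card_range] at key; exact key
      · intro t ht
        have ht' := Finset.mem_range.1 ht
        have hlt1 : k * c + t < k * χ := hlt t ht'
        have hlt2 : k * c + t < m := lt_of_lt_of_le hlt1 hm
        have hmod : (k * c + t) % m = k * c + t := Nat.mod_eq_of_lt hlt2
        simp only [Finset.mem_coe, Finset.mem_filter, Finset.mem_univ, true_and, hmod, hlt1, if_pos]
        rw [Nat.mul_add_div hk, Nat.div_eq_of_lt ht', Nat.add_zero]
      · intro t1 h1 t2 h2 heq
        have h1' := Finset.mem_range.1 h1
        have h2' := Finset.mem_range.1 h2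
        have e1 : (k * c + t1) % m = k * c + t1 :=
          Nat.mod_eq_of_lt (lt_of_lt_of_le (hlt t1 h1') hm)
        have e2 : (k * c + t2) % m = k * c + t2 :=
          Nat.mod_eq_of_lt (lt_of_lt_of_le (hlt t2 h2') hm)
        have := congrArg Fin.val heq
        simp only [e1, e2] at this
        omega
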